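/- Let α ≥ 2, m ≥ 1, μ > 0. If p > 1 - (α C(αm-1, α-1))^{-1/(α-1)}, then the service rate μ_s(α) = ∑_{φ=α}^{αm} (αμ/(H_φ - H_{φ-α})) C(αm, φ)(1-p)^φ p^{αm-φ} is strictly less than μ_s(1) = μm(1-p). -/

import Mathlib

/-- The ℓ-th harmonic number H_ℓ = ∑_{i=1}^ℓ 1/i. -/
noncomputable def H (n : ℕ) : ℝ := ∑ i ∈ Finset.range n, 1 / (i + 1 : ℝ)

lemma H_diff_ge (α φ : ℕ) (hα : 0 < α) (h : α ≤ φ) :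
    (α : ℝ) / φ ≤ H φ - H (φ - α) := by
  have hsub : φ - α ≤ φ := Nat.sub_le _ _
  have h1 : H φ - H (φ - α) = ∑ i ∈ Finset.Ico (φ - α) φ, 1 / (i + 1 : ℝ) := by
    rw [H, H, Finset.sum_Ico_eq_sub _ hsub]
  rw [h1]
  have hφ0 : (0:ℝ) < φ := by exact_mod_cast lt_of_lt_of_le hα h
  calc (α : ℝ) / φ = (Finset.Ico (φ - α) φ).card • ((1:ℝ) / φ) := by
        rw [Nat.card_Ico, Nat.sub_sub_self h, nsmul_eq_mul]
        ring
    _ ≤ ∑ i ∈ Finset.Ico (φ - α) φ, 1 / (i + 1 : ℝ) := by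
        apply Finset.card_nsmul_le_sum
        intro i hi
        have hi2 := (Finset.mem_Ico.mp hi).2
        have : (i:ℝ) + 1 ≤ φ := by exact_mod_cast Nat.succ_le_of_lt hi2
        apply one_div_le_one_div_of_le <;> [positivity; exact this]

theorem prob_access_alpha_worse_than_one (α m : ℕ) (μ p : ℝ)
    (hα : 2 ≤ α) (hm : 1 ≤ m) (hμ : 0 < μ)
    (hp : p > 1 - ((α : ℝ) * ((α * m - 1).choose (α - 1) : ℝ)) ^ (-(1 / ((α : ℝ) - 1))))
    (hp1 : p < 1) :
    ∑ φ ∈ Finset.Icc α (α * m),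
        (α * μ / (H φ - H (φ - α))) * ((α * m).choose φ : ℝ) * (1 - p) ^ φ * p ^ (α * m - φ) <
      μ * m * (1 - p) := by
  set n := α * m with hn
  have hαn : α ≤ n := Nat.le_mul_of_pos_right α (by omega)
  have hα1 : 1 ≤ α := by omega
  set q : ℝ := 1 - p with hq
  have hq0 : 0 < q := by simp only [hq]; linarith
  set K : ℝ := (α : ℝ) * ((n - 1).choose (α - 1) : ℝ) with hK
  have hC1 : 1 ≤ (n-1).choose (α-1) := Nat.choose_pos (by omega)
  have hK1 : (1:ℝ) < K := by
    have : (2:ℝ) ≤ (α:ℝ) := by exact_mod_cast hα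
    have h2 : (1:ℝ) ≤ ((n-1).choose (α-1) : ℝ) := by exact_mod_cast hC1
    nlinarith
  have hK0 : (0:ℝ) < K := by linarith
  -- p > 0
  have hc1 : K ^ (-(1 / ((α : ℝ) - 1))) < 1 := by
    apply Real.rpow_lt_one_of_one_lt_of_neg hK1
    have h2 : (0:ℝ) < (α:ℝ) - 1 := by
      have : (2:ℝ) ≤ (α:ℝ) := by exact_mod_cast hα
      linarith
    have h3 : 0 < 1 / ((α:ℝ) - 1) := div_pos one_pos h2
    linarith
  have hp0 : 0 < p := by
    have := hp
    nlinarith [Real.rpow_pos_of_pos hK0 (-(1 / ((α : ℝ) - 1)))]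
  -- key: K * q^(α-1) < 1
  have hkey : K * q ^ (α - 1) < 1 := by
    have hα2 : (2:ℝ) ≤ (α:ℝ) := by exact_mod_cast hα
    have hcast : ((α - 1 : ℕ) : ℝ) = (α:ℝ) - 1 := by
      push_cast [Nat.cast_sub hα1]; ring
    have hqlt : q < K ^ (-(1 / ((α : ℝ) - 1))) := by simp only [hq]; linarith
    have hpow : q ^ (α - 1) < (K ^ (-(1 / ((α : ℝ) - 1)))) ^ (α - 1) :=
      pow_lt_pow_left₀ hqlt hq0.le (by omega)
    have heq : (K ^ (-(1 / ((α : ℝ) - 1)))) ^ (α - 1) = K⁻¹ := by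
      rw [← Real.rpow_natCast (K ^ (-(1 / ((α : ℝ) - 1)))) (α - 1),
        ← Real.rpow_mul hK0.le, hcast]
      have hne : (α:ℝ) - 1 ≠ 0 := by linarith
      have : -(1 / ((α : ℝ) - 1)) * ((α:ℝ) - 1) = -1 := by
        rw [neg_mul, one_div, inv_mul_cancel₀ hne]
      rw [this, Real.rpow_neg_one]
    have := mul_lt_mul_of_pos_left (heq ▸ hpow) hK0
    rwa [mul_inv_cancel₀ (ne_of_gt hK0)] at this
  -- per-term bound
  have hterm : ∀ φ ∈ Finset.Icc α n,
      (α * μ / (H φ - H (φ - α))) * ((n).choose φ : ℝ) * q ^ φ * p ^ (n - φ) ≤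
      μ * n * ((n-1).choose (α-1) : ℝ) * (((n-α).choose (φ-α) : ℝ) * q ^ φ * p ^ (n - φ)) := by
    intro φ hφ
    obtain ⟨hαφ, hφn⟩ := Finset.mem_Icc.mp hφ
    have hφ0 : 0 < φ := by omega
    have hφR : (0:ℝ) < φ := by exact_mod_cast hφ0
    have hD : (α : ℝ) / φ ≤ H φ - H (φ - α) := H_diff_ge α φ (by omega) hαφ
    have hDpos : (0:ℝ) < (α:ℝ) / φ := by
      have : (0:ℝ) < (α:ℝ) := by exact_mod_cast (by omega : 0 < α)
      positivity
    have hrate : α * μ / (H φ - H (φ - α)) ≤ μ * φ := by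
      have h1 : α * μ / (H φ - H (φ - α)) ≤ α * μ / ((α:ℝ) / φ) := by
        gcongr
      have h2 : α * μ / ((α:ℝ) / φ) = μ * φ := by
        rw [div_div_eq_mul_div]
        field_simp
      linarith
    have hid : (φ : ℝ) * ((n).choose φ : ℝ) = (n : ℝ) * ((n-1).choose (φ-1) : ℝ) := by
      have hnat := Nat.add_one_mul_choose_eq (n-1) (φ-1)
      rw [show n - 1 + 1 = n by omega, show φ - 1 + 1 = φ by omega] at hnat
      have hR : (n:ℝ) * ((n-1).choose (φ-1) : ℝ) = ((n).choose φ : ℝ) * (φ:ℝ) := by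
        exact_mod_cast hnat
      linarith
    have hch : ((n-1).choose (φ-1) : ℝ) ≤ ((n-1).choose (α-1) : ℝ) * ((n-α).choose (φ-α) : ℝ) := by
      have hid2 := Nat.choose_mul (n := n-1) (k := φ-1) (s := α-1) (by omega)
      have he1 : n - 1 - (α - 1) = n - α := by omega
      have he2 : φ - 1 - (α - 1) = φ - α := by omega
      rw [he1, he2] at hid2
      have hge : 1 ≤ (φ-1).choose (α-1) := Nat.choose_pos (by omega)
      have : (n-1).choose (φ-1) ≤ (n-1).choose (α-1) * ((n-α).choose (φ-α)) := by
        calc (n-1).choose (φ-1) ≤ (n-1).choose (φ-1) * (φ-1).choose (α-1) :=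
              Nat.le_mul_of_pos_right _ hge
          _ = _ := hid2
      exact_mod_cast this
    calc (α * μ / (H φ - H (φ - α))) * ((n).choose φ : ℝ) * q ^ φ * p ^ (n - φ)
        ≤ (μ * φ) * ((n).choose φ : ℝ) * q ^ φ * p ^ (n - φ) := by
          gcongr
        _ = μ * ((n:ℝ) * ((n-1).choose (φ-1) : ℝ)) * q ^ φ * p ^ (n - φ) := by
          rw [← hid]; ring
        _ ≤ μ * ((n:ℝ) * (((n-1).choose (α-1) : ℝ) * ((n-α).choose (φ-α) : ℝ))) * q ^ φ * p ^ (n - φ) := by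
          gcongr
        _ = μ * n * ((n-1).choose (α-1) : ℝ) * (((n-α).choose (φ-α) : ℝ) * q ^ φ * p ^ (n - φ)) := by
          ring
  have hsum : ∑ φ ∈ Finset.Icc α n, (((n-α).choose (φ-α) : ℝ) * q ^ φ * p ^ (n - φ)) = q ^ α := by
    have h1 : ∀ φ ∈ Finset.Icc α n,
        (((n-α).choose (φ-α) : ℝ) * q ^ φ * p ^ (n - φ)) =
        q ^ α * (q ^ (φ-α) * p ^ ((n-α) - (φ-α)) * ((n-α).choose (φ-α) : ℝ)) := by
      intro φ hφ
      obtain ⟨hαφ, hφn⟩ := Finset.mem_Icc.mp hφ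
      have : q ^ φ = q ^ α * q ^ (φ - α) := by
        rw [← pow_add]; congr 1; omega
      rw [this]
      have : n - φ = (n - α) - (φ - α) := by omega
      rw [this]; ring
    rw [Finset.sum_congr rfl h1, ← Finset.mul_sum]
    have h2 : ∑ φ ∈ Finset.Icc α n, (q ^ (φ-α) * p ^ ((n-α) - (φ-α)) * ((n-α).choose (φ-α) : ℝ))
        = ∑ i ∈ Finset.range (n - α + 1), (q ^ i * p ^ ((n-α) - i) * ((n-α).choose i : ℝ)) := by
      rw [show Finset.Icc α n = Finset.Ico α (n+1) by rw [Finset.Ico_add_one_right_eq_Icc],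
        Finset.sum_Ico_eq_sum_range]
      have : n + 1 - α = n - α + 1 := by omega
      rw [this]
      apply Finset.sum_congr rfl
      intro i _
      rw [show α + i - α = i from by omega]
    rw [h2, ← add_pow q p (n - α)]
    have : q + p = 1 := by simp [hq]
    rw [this, one_pow, mul_one]
  calc ∑ φ ∈ Finset.Icc α n,
        (α * μ / (H φ - H (φ - α))) * ((n).choose φ : ℝ) * q ^ φ * p ^ (n - φ)
      ≤ ∑ φ ∈ Finset.Icc α n,
        μ * n * ((n-1).choose (α-1) : ℝ) * (((n-α).choose (φ-α) : ℝ) * q ^ φ * p ^ (n - φ)) :=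
        Finset.sum_le_sum hterm
    _ = μ * n * ((n-1).choose (α-1) : ℝ) * q ^ α := by
        rw [← Finset.mul_sum, hsum]
    _ = (μ * m * q) * (K * q ^ (α - 1)) := by
        have hcastn : (n : ℝ) = (α : ℝ) * m := by push_cast [hn]; ring
        have hqα : q ^ α = q * q ^ (α - 1) := by
          rw [← pow_succ']; congr 1; omega
        rw [hcastn, hqα, hK]; ring
    _ < (μ * m * q) * 1 := by
        apply mul_lt_mul_of_pos_left hkey
        have : (1:ℝ) ≤ (m:ℝ) := by exact_mod_cast hm
        positivity
    _ = μ * m * q := by ring
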